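/- arXiv:math/0604444 — 4 statements merged into one kernel-verified Lean document; each statement's English description precedes it below -/
import Mathlib

section
/- Let α ∈ (0,1), M > 0, and let ν be a finite positive Borel measure on ℂ such that ν(D(z,r)) ≤ M r^{1+α} for every z ∈ ℂ and every r > 0. Then for every z ∈ ℂ the integral h(z) = ∫_ℂ 1/(π(z−w)) dν(w) converges absolutely, and there is a constant C = C(α, M) > 0 such that |h(z)−h(w)| ≤ C|z−w|^α for all z, w ∈ ℂ. In particular h ∈ Lip_α(ℂ). -/
open MeasureTheory Metric
open scoped ENNReal

noncomputable section

open Real in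
private lemma aux_tsum_geom (c q : ℝ) (hc : 0 ≤ c) (hq0 : 0 ≤ q) (hq1 : q < 1) :
    (∑' k : ℕ, ENNReal.ofReal (c * q ^ k)) ≤ ENNReal.ofReal (c * (1 - q)⁻¹) := by
  have h1 : ∀ k : ℕ, ENNReal.ofReal (c * q ^ k)
      = ENNReal.ofReal c * (ENNReal.ofReal q) ^ k := by
    intro k
    rw [ENNReal.ofReal_mul hc, ENNReal.ofReal_pow hq0]
  calc ∑' k : ℕ, ENNReal.ofReal (c * q ^ k)
      = ∑' k : ℕ, ENNReal.ofReal c * (ENNReal.ofReal q) ^ k := by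
        exact tsum_congr h1
    _ = ENNReal.ofReal c * (1 - ENNReal.ofReal q)⁻¹ := by
        rw [ENNReal.tsum_mul_left, ENNReal.tsum_geometric]
    _ ≤ _ := by
        rw [ENNReal.ofReal_mul hc]
        gcongr
        rw [← ENNReal.ofReal_one, ← ENNReal.ofReal_sub _ hq0,
          ENNReal.ofReal_inv_of_pos (by linarith)]

open Real in
private lemma lemA (α M : ℝ) (hα : α ∈ Set.Ioo (0:ℝ) 1) (hM : 0 < M) (ν : Measure ℂ)
    (hgrowth : ∀ (z : ℂ) (r : ℝ), 0 < r → ν (ball z r) ≤ ENNReal.ofReal (M * r ^ (1 + α)))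
    (z : ℂ) (r : ℝ) (hr : 0 < r) :
    ∫⁻ w in ball z r, ENNReal.ofReal ‖z - w‖⁻¹ ∂ν
      ≤ ENNReal.ofReal ((2*M*(1 - ((2:ℝ)⁻¹) ^ α)⁻¹) * r ^ α) := by
  obtain ⟨hα0, hα1⟩ := hα
  set q : ℝ := ((2:ℝ)⁻¹) ^ α with hq
  have hq0 : 0 ≤ q := Real.rpow_nonneg (by norm_num) _
  have hq1 : q < 1 := Real.rpow_lt_one (by norm_num) (by norm_num) hα0
  set A : ℕ → Set ℂ := fun k => ball z (r * (2⁻¹:ℝ)^k) \ ball z (r * (2⁻¹:ℝ)^(k+1)) with hA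
  -- coverage
  have hcover : ball z r ⊆ {z} ∪ ⋃ k, A k := by
    intro w hw
    rcases eq_or_ne w z with h | h
    · exact Or.inl (by simp [h])
    · right
      have hd0 : 0 < dist w z := dist_pos.2 h
      have hdr : dist w z < r := mem_ball.1 hw
      have hex : ∃ n : ℕ, r * (2⁻¹:ℝ)^n ≤ dist w z := by
        obtain ⟨n, hn⟩ := exists_pow_lt_of_lt_one (x := dist w z / r) (y := (2⁻¹:ℝ))
          (by positivity) (by norm_num)
        exact ⟨n, by rw [lt_div_iff₀ hr] at hn; nlinarith⟩
      set n := Nat.find hex with hn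
      have hPn : r * (2⁻¹:ℝ)^n ≤ dist w z := Nat.find_spec hex
      have hn0 : n ≠ 0 := by
        intro h0
        rw [h0] at hPn; simp at hPn; linarith
      obtain ⟨k, hk⟩ : ∃ k, n = k + 1 := ⟨n - 1, (Nat.succ_pred_eq_of_pos (Nat.pos_of_ne_zero hn0)).symm⟩
      have hPk : ¬ (r * (2⁻¹:ℝ)^k ≤ dist w z) := Nat.find_min hex (by omega)
      refine Set.mem_iUnion.2 ⟨k, ?_, ?_⟩
      · exact mem_ball.2 (not_le.1 hPk)
      · rw [← hk]
        exact fun hmem => absurd (mem_ball.1 hmem) (not_lt.2 hPn)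
  -- per-annulus bound
  have hterm : ∀ k : ℕ, ∫⁻ w in A k, ENNReal.ofReal ‖z - w‖⁻¹ ∂ν
      ≤ ENNReal.ofReal ((2*M*r^α) * q^k) := by
    intro k
    set t : ℝ := (2⁻¹:ℝ)^k with ht
    have ht0 : 0 < t := pow_pos (by norm_num) k
    have hb : ∀ w ∈ A k, ENNReal.ofReal ‖z - w‖⁻¹ ≤ ENNReal.ofReal ((r * (t/2))⁻¹) := by
      intro w hw
      apply ENNReal.ofReal_le_ofReal
      have h1 : r * (t/2) ≤ dist w z := by
        have := hw.2
        rw [mem_ball, not_lt] at this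
        calc r * (t/2) = r * (2⁻¹:ℝ)^(k+1) := by rw [pow_succ, ht]; ring
          _ ≤ dist w z := this
      have h2 : dist w z = ‖z - w‖ := by rw [dist_eq_norm, norm_sub_rev]
      exact inv_anti₀ (by positivity) (h2 ▸ h1)
    calc ∫⁻ w in A k, ENNReal.ofReal ‖z - w‖⁻¹ ∂ν
        ≤ ∫⁻ _ in A k, ENNReal.ofReal ((r * (t/2))⁻¹) ∂ν :=
          setLIntegral_mono' (measurableSet_ball.diff measurableSet_ball) hb
      _ = ENNReal.ofReal ((r * (t/2))⁻¹) * ν (A k) := setLIntegral_const _ _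
      _ ≤ ENNReal.ofReal ((r * (t/2))⁻¹) * ENNReal.ofReal (M * (r*t)^(1+α)) := by
          gcongr
          exact le_trans (measure_mono Set.diff_subset) (hgrowth z _ (by positivity))
      _ = ENNReal.ofReal ((r * (t/2))⁻¹ * (M * (r*t)^(1+α))) :=
          (ENNReal.ofReal_mul (by positivity)).symm
      _ = ENNReal.ofReal ((2*M*r^α) * q^k) := by
          congr 1
          have hrt : (0:ℝ) < r*t := by positivity
          have e1 : (r*t)^(1+α) = (r*t) * (r*t)^α := by
            rw [Real.rpow_add hrt, Real.rpow_one]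
          have e2 : (r*t)^α = r^α * t^α := Real.mul_rpow hr.le ht0.le
          have e3 : t^α = q^k := by
            rw [ht, hq, ← Real.rpow_natCast (2⁻¹:ℝ) k, ← Real.rpow_natCast (((2:ℝ)⁻¹)^α) k,
              ← Real.rpow_mul (by norm_num), ← Real.rpow_mul (by norm_num), mul_comm]
          rw [e1, e2, e3]
          have hr0 : r ≠ 0 := hr.ne'
          have ht0' : t ≠ 0 := ht0.ne'
          field_simp
  calc ∫⁻ w in ball z r, ENNReal.ofReal ‖z - w‖⁻¹ ∂ν
      ≤ ∫⁻ w in {z} ∪ ⋃ k, A k, ENNReal.ofReal ‖z - w‖⁻¹ ∂ν := lintegral_mono_set hcover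
    _ ≤ (∫⁻ w in {z}, ENNReal.ofReal ‖z - w‖⁻¹ ∂ν)
        + ∫⁻ w in ⋃ k, A k, ENNReal.ofReal ‖z - w‖⁻¹ ∂ν := lintegral_union_le _ _ _
    _ = ∫⁻ w in ⋃ k, A k, ENNReal.ofReal ‖z - w‖⁻¹ ∂ν := by
        rw [lintegral_singleton]; simp
    _ ≤ ∑' k, ∫⁻ w in A k, ENNReal.ofReal ‖z - w‖⁻¹ ∂ν := lintegral_iUnion_le _ _
    _ ≤ ∑' k, ENNReal.ofReal ((2*M*r^α) * q^k) := ENNReal.tsum_le_tsum hterm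
    _ ≤ ENNReal.ofReal ((2*M*r^α) * (1 - q)⁻¹) := aux_tsum_geom _ _ (by positivity) hq0 hq1
    _ = ENNReal.ofReal ((2*M*(1 - ((2:ℝ)⁻¹) ^ α)⁻¹) * r ^ α) := by rw [hq]; congr 1; ring

open Real in
private lemma lemB (α M : ℝ) (hα : α ∈ Set.Ioo (0:ℝ) 1) (hM : 0 < M) (ν : Measure ℂ)
    (hgrowth : ∀ (z : ℂ) (r : ℝ), 0 < r → ν (ball z r) ≤ ENNReal.ofReal (M * r ^ (1 + α)))
    (z : ℂ) (r : ℝ) (hr : 0 < r) :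
    ∫⁻ w in (ball z r)ᶜ, ENNReal.ofReal ((‖z - w‖⁻¹)^2) ∂ν
      ≤ ENNReal.ofReal (((2:ℝ)^(1+α)*M*(1 - (2:ℝ)^(α-1))⁻¹) * r ^ (α-1)) := by
  obtain ⟨hα0, hα1⟩ := hα
  set q : ℝ := (2:ℝ) ^ (α-1) with hq
  have hq0 : 0 ≤ q := Real.rpow_nonneg (by norm_num) _
  have hq1 : q < 1 := Real.rpow_lt_one_of_one_lt_of_neg (by norm_num) (by linarith)
  set A : ℕ → Set ℂ := fun k => ball z (r * (2:ℝ)^(k+1)) \ ball z (r * (2:ℝ)^k) with hA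
  have hcover : (ball z r)ᶜ ⊆ ⋃ k, A k := by
    intro w hw
    have hdr : r ≤ dist w z := by
      have := hw; rw [Set.mem_compl_iff, mem_ball, not_lt] at this; exact this
    have hex : ∃ n : ℕ, dist w z < r * (2:ℝ)^n := by
      obtain ⟨n, hn⟩ := pow_unbounded_of_one_lt (y := (2:ℝ)) (dist w z / r) (by norm_num)
      exact ⟨n, by rw [div_lt_iff₀ hr] at hn; nlinarith⟩
    set n := Nat.find hex with hn
    have hPn : dist w z < r * (2:ℝ)^n := Nat.find_spec hex
    have hn0 : n ≠ 0 := by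
      intro h0; rw [h0] at hPn; simp at hPn; linarith
    obtain ⟨k, hk⟩ : ∃ k, n = k + 1 := ⟨n - 1, (Nat.succ_pred_eq_of_pos (Nat.pos_of_ne_zero hn0)).symm⟩
    have hPk : ¬ (dist w z < r * (2:ℝ)^k) := Nat.find_min hex (by omega)
    refine Set.mem_iUnion.2 ⟨k, mem_ball.2 (hk ▸ hPn), fun hmem => hPk (mem_ball.1 hmem)⟩
  have hterm : ∀ k : ℕ, ∫⁻ w in A k, ENNReal.ofReal ((‖z - w‖⁻¹)^2) ∂ν
      ≤ ENNReal.ofReal (((2:ℝ)^(1+α)*M*r^(α-1)) * q^k) := by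
    intro k
    set t : ℝ := (2:ℝ)^k with ht
    have ht0 : 0 < t := pow_pos (by norm_num) k
    have hrt : (0:ℝ) < r * t := by positivity
    have hb : ∀ w ∈ A k, ENNReal.ofReal ((‖z - w‖⁻¹)^2)
        ≤ ENNReal.ofReal ((((r*t))⁻¹)^2) := by
      intro w hw
      apply ENNReal.ofReal_le_ofReal
      have h1 : r * t ≤ dist w z := by
        have := hw.2; rw [mem_ball, not_lt] at this; exact this
      have h2 : dist w z = ‖z - w‖ := by rw [dist_eq_norm, norm_sub_rev]
      have h3 : (‖z - w‖)⁻¹ ≤ (r*t)⁻¹ := inv_anti₀ hrt (h2 ▸ h1)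
      have h4 : (0:ℝ) ≤ ‖z - w‖⁻¹ := by positivity
      exact pow_le_pow_left₀ h4 h3 2
    calc ∫⁻ w in A k, ENNReal.ofReal ((‖z - w‖⁻¹)^2) ∂ν
        ≤ ∫⁻ _ in A k, ENNReal.ofReal (((r*t)⁻¹)^2) ∂ν :=
          setLIntegral_mono' (measurableSet_ball.diff measurableSet_ball) hb
      _ = ENNReal.ofReal (((r*t)⁻¹)^2) * ν (A k) := setLIntegral_const _ _
      _ ≤ ENNReal.ofReal (((r*t)⁻¹)^2) * ENNReal.ofReal (M * (2*(r*t))^(1+α)) := by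
          gcongr
          refine le_trans (measure_mono Set.diff_subset) ?_
          have : r * (2:ℝ)^(k+1) = 2*(r*t) := by rw [pow_succ, ht]; ring
          rw [this]
          exact hgrowth z _ (by positivity)
      _ = ENNReal.ofReal (((r*t)⁻¹)^2 * (M * (2*(r*t))^(1+α))) :=
          (ENNReal.ofReal_mul (by positivity)).symm
      _ = ENNReal.ofReal (((2:ℝ)^(1+α)*M*r^(α-1)) * q^k) := by
          congr 1
          have e1 : (2*(r*t))^(1+α) = (2:ℝ)^(1+α) * ((r*t)^2 * (r*t)^(α-1)) := by
            rw [Real.mul_rpow (by norm_num) hrt.le]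
            congr 1
            rw [show (1+α) = 2 + (α-1) by ring, Real.rpow_add hrt,
              show ((2:ℝ)) = ((2:ℕ):ℝ) by norm_num, Real.rpow_natCast]
          have e2 : (r*t)^(α-1) = r^(α-1) * t^(α-1) := Real.mul_rpow hr.le ht0.le
          have e3 : t^(α-1) = q^k := by
            rw [ht, hq, ← Real.rpow_natCast (2:ℝ) k, ← Real.rpow_natCast ((2:ℝ)^(α-1)) k,
              ← Real.rpow_mul (by norm_num), ← Real.rpow_mul (by norm_num), mul_comm]
          rw [e1, e2, e3]
          have hr0 : r ≠ 0 := hr.ne'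
          have ht0' : t ≠ 0 := ht0.ne'
          field_simp
  calc ∫⁻ w in (ball z r)ᶜ, ENNReal.ofReal ((‖z - w‖⁻¹)^2) ∂ν
      ≤ ∫⁻ w in ⋃ k, A k, ENNReal.ofReal ((‖z - w‖⁻¹)^2) ∂ν := lintegral_mono_set hcover
    _ ≤ ∑' k, ∫⁻ w in A k, ENNReal.ofReal ((‖z - w‖⁻¹)^2) ∂ν := lintegral_iUnion_le _ _
    _ ≤ ∑' k, ENNReal.ofReal (((2:ℝ)^(1+α)*M*r^(α-1)) * q^k) := ENNReal.tsum_le_tsum hterm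
    _ ≤ ENNReal.ofReal (((2:ℝ)^(1+α)*M*r^(α-1)) * (1 - q)⁻¹) := by
        refine aux_tsum_geom _ _ ?_ hq0 hq1
        have : (0:ℝ) < (2:ℝ)^(1+α) := Real.rpow_pos_of_pos (by norm_num) _
        have : (0:ℝ) < r^(α-1) := Real.rpow_pos_of_pos hr _
        positivity
    _ = ENNReal.ofReal (((2:ℝ)^(1+α)*M*(1 - (2:ℝ)^(α-1))⁻¹) * r ^ (α-1)) := by
        rw [hq]; congr 1; ring

open Real in
private lemma norm_cauchy_kernel (z u : ℂ) :
    ‖((Real.pi:ℂ) * (z - u))⁻¹‖ = Real.pi⁻¹ * ‖z - u‖⁻¹ := by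
  rw [norm_inv, norm_mul, Complex.norm_real, Real.norm_eq_abs,
    abs_of_pos Real.pi_pos, mul_inv]

open Real in
private lemma lemA' (α M : ℝ) (hα : α ∈ Set.Ioo (0:ℝ) 1) (hM : 0 < M) (ν : Measure ℂ)
    (hgrowth : ∀ (z : ℂ) (r : ℝ), 0 < r → ν (ball z r) ≤ ENNReal.ofReal (M * r ^ (1 + α)))
    (z : ℂ) (r : ℝ) (hr : 0 < r) :
    ∫⁻ u in ball z r, ENNReal.ofReal ‖((Real.pi:ℂ) * (z - u))⁻¹‖ ∂ν
      ≤ ENNReal.ofReal (Real.pi⁻¹ * ((2*M*(1 - ((2:ℝ)⁻¹) ^ α)⁻¹) * r ^ α)) := by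
  have hπ : (0:ℝ) < Real.pi := Real.pi_pos
  calc ∫⁻ u in ball z r, ENNReal.ofReal ‖((Real.pi:ℂ) * (z - u))⁻¹‖ ∂ν
      = ∫⁻ u in ball z r, ENNReal.ofReal (Real.pi⁻¹) * ENNReal.ofReal ‖z - u‖⁻¹ ∂ν := by
        refine lintegral_congr fun u => ?_
        rw [norm_cauchy_kernel, ENNReal.ofReal_mul (by positivity)]
    _ = ENNReal.ofReal (Real.pi⁻¹) * ∫⁻ u in ball z r, ENNReal.ofReal ‖z - u‖⁻¹ ∂ν :=
        lintegral_const_mul' _ _ ENNReal.ofReal_ne_top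
    _ ≤ ENNReal.ofReal (Real.pi⁻¹) * ENNReal.ofReal ((2*M*(1 - ((2:ℝ)⁻¹) ^ α)⁻¹) * r ^ α) := by
        gcongr
        exact lemA α M hα hM ν hgrowth z r hr
    _ = ENNReal.ofReal (Real.pi⁻¹ * ((2*M*(1 - ((2:ℝ)⁻¹) ^ α)⁻¹) * r ^ α)) :=
        (ENNReal.ofReal_mul (by positivity)).symm

open Real in
private lemma lemInt (α M : ℝ) (hα : α ∈ Set.Ioo (0:ℝ) 1) (hM : 0 < M) (ν : Measure ℂ)
    [IsFiniteMeasure ν]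
    (hgrowth : ∀ (z : ℂ) (r : ℝ), 0 < r → ν (ball z r) ≤ ENNReal.ofReal (M * r ^ (1 + α)))
    (z : ℂ) : Integrable (fun w : ℂ => ((Real.pi:ℂ) * (z - w))⁻¹) ν := by
  constructor
  · exact ((measurable_const.mul (measurable_const.sub measurable_id)).inv).aestronglyMeasurable
  · rw [hasFiniteIntegral_iff_norm, ← lintegral_add_compl _ (measurableSet_ball (x := z) (ε := 1))]
    apply ENNReal.add_lt_top.2
    constructor
    · exact lt_of_le_of_lt (lemA' α M hα hM ν hgrowth z 1 one_pos) ENNReal.ofReal_lt_top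
    · have hb : ∀ u ∈ (ball z 1)ᶜ, ENNReal.ofReal ‖((Real.pi:ℂ) * (z - u))⁻¹‖
          ≤ ENNReal.ofReal (Real.pi⁻¹) := by
        intro u hu
        apply ENNReal.ofReal_le_ofReal
        rw [norm_cauchy_kernel]
        have h1 : (1:ℝ) ≤ ‖z - u‖ := by
          have := hu; rw [Set.mem_compl_iff, mem_ball, not_lt, dist_eq_norm, norm_sub_rev] at this
          exact this
        calc Real.pi⁻¹ * ‖z - u‖⁻¹ ≤ Real.pi⁻¹ * 1 := by
              gcongr
              exact inv_le_one_of_one_le₀ h1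
          _ = Real.pi⁻¹ := mul_one _
      calc ∫⁻ u in (ball z 1)ᶜ, ENNReal.ofReal ‖((Real.pi:ℂ) * (z - u))⁻¹‖ ∂ν
          ≤ ∫⁻ _ in (ball z 1)ᶜ, ENNReal.ofReal (Real.pi⁻¹) ∂ν :=
            setLIntegral_mono' measurableSet_ball.compl hb
        _ = ENNReal.ofReal (Real.pi⁻¹) * ν (ball z 1)ᶜ := setLIntegral_const _ _
        _ < ⊤ := ENNReal.mul_lt_top ENNReal.ofReal_lt_top (measure_lt_top ν _)

set_option maxHeartbeats 1000000 in
/-- If `ν` is a finite positive Borel measure on `ℂ` with growth `ν(D(z,r)) ≤ M r^{1+α}`,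
then its Cauchy transform `h(z) = ∫ 1/(π(z−w)) dν(w)` converges absolutely at every point
and is globally `α`-Hölder continuous with a constant depending only on `α` and `M`. -/
theorem cauchyTransform_holder (α M : ℝ) (hα : α ∈ Set.Ioo (0 : ℝ) 1) (hM : 0 < M)
    (ν : Measure ℂ) [IsFiniteMeasure ν]
    (hgrowth : ∀ (z : ℂ) (r : ℝ), 0 < r → ν (ball z r) ≤ ENNReal.ofReal (M * r ^ (1 + α))) :
    (∀ z : ℂ, Integrable (fun w : ℂ => (↑Real.pi * (z - w))⁻¹) ν) ∧
    ∃ C > 0, ∀ z w : ℂ,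
      ‖(∫ u, (↑Real.pi * (z - u))⁻¹ ∂ν) - (∫ u, (↑Real.pi * (w - u))⁻¹ ∂ν)‖ ≤
        C * ‖z - w‖ ^ α := by
  obtain ⟨hα0, hα1⟩ := hα
  have hπ : (0:ℝ) < Real.pi := Real.pi_pos
  set C₁ : ℝ := 2*M*(1 - ((2:ℝ)⁻¹) ^ α)⁻¹ with hC₁def
  set C₂ : ℝ := (2:ℝ)^(1+α)*M*(1 - (2:ℝ)^(α-1))⁻¹ with hC₂def
  have hq1 : ((2:ℝ)⁻¹)^α < 1 := Real.rpow_lt_one (by norm_num) (by norm_num) hα0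
  have hq1' : (2:ℝ)^(α-1) < 1 := Real.rpow_lt_one_of_one_lt_of_neg (by norm_num) (by linarith)
  have h2α : (0:ℝ) < (2:ℝ)^α := Real.rpow_pos_of_pos (by norm_num) α
  have h3α : (0:ℝ) < (3:ℝ)^α := Real.rpow_pos_of_pos (by norm_num) α
  have h2α1 : (0:ℝ) < (2:ℝ)^(α-1) := Real.rpow_pos_of_pos (by norm_num) _
  have h21α : (0:ℝ) < (2:ℝ)^(1+α) := Real.rpow_pos_of_pos (by norm_num) _
  have hC₁ : 0 < C₁ := by
    rw [hC₁def]
    have h1 : (0:ℝ) < 1 - ((2:ℝ)⁻¹)^α := by linarith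
    exact mul_pos (by linarith) (inv_pos.2 h1)
  have hC₂ : 0 < C₂ := by
    rw [hC₂def]
    have h1 : (0:ℝ) < 1 - (2:ℝ)^(α-1) := by linarith
    exact mul_pos (mul_pos h21α hM) (inv_pos.2 h1)
  set Cs : ℝ := Real.pi⁻¹*(C₁*(2:ℝ)^α + C₁*(3:ℝ)^α + C₂*2*(2:ℝ)^(α-1)) with hCsdef
  have hCs0 : 0 < Cs := by
    rw [hCsdef]
    have hπi : (0:ℝ) < Real.pi⁻¹ := inv_pos.2 hπ
    have t1 : 0 < C₁ * (2:ℝ)^α := mul_pos hC₁ h2α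
    have t2 : 0 < C₁ * (3:ℝ)^α := mul_pos hC₁ h3α
    have t3 : 0 < C₂ * 2 * (2:ℝ)^(α-1) := mul_pos (mul_pos hC₂ two_pos) h2α1
    exact mul_pos hπi (by linarith)
  refine ⟨fun z => lemInt α M ⟨hα0, hα1⟩ hM ν hgrowth z, Cs + 1, by linarith, ?_⟩
  intro z w
  rcases eq_or_ne z w with rfl | hzw
  · simp [Real.zero_rpow hα0.ne']
  set δ : ℝ := ‖z - w‖ with hδdef
  have hδ0 : 0 < δ := by
    rw [hδdef, norm_pos_iff]
    exact sub_ne_zero_of_ne hzw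
  have hf := lemInt α M ⟨hα0, hα1⟩ hM ν hgrowth z
  have hg := lemInt α M ⟨hα0, hα1⟩ hM ν hgrowth w
  -- splitting identity
  have hsplit : (∫ u, ((Real.pi:ℂ) * (z - u))⁻¹ ∂ν) - (∫ u, ((Real.pi:ℂ) * (w - u))⁻¹ ∂ν)
      = ((∫ u in ball z (2*δ), ((Real.pi:ℂ) * (z - u))⁻¹ ∂ν)
          - (∫ u in ball z (2*δ), ((Real.pi:ℂ) * (w - u))⁻¹ ∂ν))
        + ∫ u in (ball z (2*δ))ᶜ,
            (((Real.pi:ℂ) * (z - u))⁻¹ - ((Real.pi:ℂ) * (w - u))⁻¹) ∂ν := by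
    have e1 := (integral_add_compl (measurableSet_ball (x := z) (ε := 2*δ)) hf).symm
    have e2 := (integral_add_compl (measurableSet_ball (x := z) (ε := 2*δ)) hg).symm
    rw [e1, e2, integral_sub hf.restrict hg.restrict]
    ring
  -- near bound at z
  have key1 : ‖∫ u in ball z (2*δ), ((Real.pi:ℂ) * (z - u))⁻¹ ∂ν‖
      ≤ Real.pi⁻¹ * (C₁ * (2*δ)^α) := by
    refine (norm_integral_le_lintegral_norm _).trans ?_
    have hb := lemA' α M ⟨hα0, hα1⟩ hM ν hgrowth z (2*δ) (by positivity)
    rw [← hC₁def] at hb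
    calc (∫⁻ u in ball z (2*δ), ENNReal.ofReal ‖((Real.pi:ℂ) * (z - u))⁻¹‖ ∂ν).toReal
        ≤ (ENNReal.ofReal (Real.pi⁻¹ * (C₁ * (2*δ)^α))).toReal :=
          ENNReal.toReal_mono ENNReal.ofReal_ne_top hb
      _ = Real.pi⁻¹ * (C₁ * (2*δ)^α) := ENNReal.toReal_ofReal
          (mul_nonneg (by positivity)
            (mul_nonneg hC₁.le (Real.rpow_nonneg (by positivity) _)))
  -- near bound at w
  have key2 : ‖∫ u in ball z (2*δ), ((Real.pi:ℂ) * (w - u))⁻¹ ∂ν‖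
      ≤ Real.pi⁻¹ * (C₁ * (3*δ)^α) := by
    refine (norm_integral_le_lintegral_norm _).trans ?_
    have hsub : ball z (2*δ) ⊆ ball w (3*δ) := by
      intro u hu
      rw [mem_ball] at hu ⊢
      have hzwd : dist z w = δ := by rw [dist_eq_norm]
      calc dist u w ≤ dist u z + dist z w := dist_triangle u z w
        _ < 2*δ + δ := by rw [hzwd]; linarith
        _ = 3*δ := by ring
    have hb := lemA' α M ⟨hα0, hα1⟩ hM ν hgrowth w (3*δ) (by positivity)
    rw [← hC₁def] at hb
    calc (∫⁻ u in ball z (2*δ), ENNReal.ofReal ‖((Real.pi:ℂ) * (w - u))⁻¹‖ ∂ν).toReal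
        ≤ (∫⁻ u in ball w (3*δ), ENNReal.ofReal ‖((Real.pi:ℂ) * (w - u))⁻¹‖ ∂ν).toReal := by
          refine ENNReal.toReal_mono ?_ (lintegral_mono_set hsub)
          exact (lt_of_le_of_lt hb ENNReal.ofReal_lt_top).ne
      _ ≤ (ENNReal.ofReal (Real.pi⁻¹ * (C₁ * (3*δ)^α))).toReal :=
          ENNReal.toReal_mono ENNReal.ofReal_ne_top hb
      _ = Real.pi⁻¹ * (C₁ * (3*δ)^α) := ENNReal.toReal_ofReal
          (mul_nonneg (by positivity)
            (mul_nonneg hC₁.le (Real.rpow_nonneg (by positivity) _)))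
  -- far bound
  have key3 : ‖∫ u in (ball z (2*δ))ᶜ,
        (((Real.pi:ℂ) * (z - u))⁻¹ - ((Real.pi:ℂ) * (w - u))⁻¹) ∂ν‖
      ≤ (2*δ*Real.pi⁻¹) * (C₂ * (2*δ)^(α-1)) := by
    refine (norm_integral_le_lintegral_norm _).trans ?_
    have hpt : ∀ u ∈ (ball z (2*δ))ᶜ,
        ENNReal.ofReal ‖((Real.pi:ℂ) * (z - u))⁻¹ - ((Real.pi:ℂ) * (w - u))⁻¹‖
          ≤ ENNReal.ofReal ((2*δ*Real.pi⁻¹) * (‖z - u‖⁻¹)^2) := by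
      intro u hu
      apply ENNReal.ofReal_le_ofReal
      have h2δ : 2*δ ≤ ‖z - u‖ := by
        rw [Set.mem_compl_iff, mem_ball, not_lt, dist_eq_norm, norm_sub_rev] at hu
        exact hu
      have hzu0 : 0 < ‖z - u‖ := lt_of_lt_of_le (by positivity) h2δ
      have htri : ‖z - u‖ ≤ δ + ‖w - u‖ := by
        calc ‖z - u‖ = ‖(z - w) + (w - u)‖ := by rw [sub_add_sub_cancel]
          _ ≤ ‖z - w‖ + ‖w - u‖ := norm_add_le _ _
          _ = δ + ‖w - u‖ := by rw [hδdef]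
      have hwu2 : ‖z - u‖/2 ≤ ‖w - u‖ := by linarith
      have hwu0 : 0 < ‖w - u‖ := by linarith
      have hzu : z - u ≠ 0 := norm_pos_iff.mp hzu0
      have hwune : w - u ≠ 0 := norm_pos_iff.mp hwu0
      have hπC : ((Real.pi:ℂ)) ≠ 0 := by exact_mod_cast Real.pi_ne_zero
      have key : ((Real.pi:ℂ) * (z - u))⁻¹ - ((Real.pi:ℂ) * (w - u))⁻¹
          = ((Real.pi:ℂ) * (w - u) - (Real.pi:ℂ) * (z - u))
            / (((Real.pi:ℂ) * (z - u)) * ((Real.pi:ℂ) * (w - u))) :=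
        inv_sub_inv (mul_ne_zero hπC hzu) (mul_ne_zero hπC hwune)
      have enum : (Real.pi:ℂ) * (w - u) - (Real.pi:ℂ) * (z - u) = (Real.pi:ℂ) * (w - z) := by
        ring
      have hπ0 : Real.pi ≠ 0 := hπ.ne'
      have ha0 : ‖z - u‖ ≠ 0 := hzu0.ne'
      have hb0 : ‖w - u‖ ≠ 0 := hwu0.ne'
      have ha0c : ‖z - u‖ ≠ 0 := ha0
      have hb0c : ‖w - u‖ ≠ 0 := hb0
      have hb0c' : ‖-u + w‖ ≠ 0 := by rw [show -u + w = w - u by ring]; exact hb0c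
      rw [key, enum]
      simp only [norm_div, norm_mul, Complex.norm_real, Real.norm_eq_abs, abs_of_pos hπ]
      have hwz : ‖w - z‖ = δ := by rw [norm_sub_rev, hδdef]
      rw [hwz, div_le_iff₀ (by positivity)]
      have e : 2*δ*Real.pi⁻¹*(‖z - u‖⁻¹)^2 * (Real.pi * ‖z - u‖ * (Real.pi * ‖w - u‖))
          = 2*δ*Real.pi*(‖w - u‖/‖z - u‖) := by
        rw [inv_pow]
        field_simp
      rw [e]
      have hhalf : (1:ℝ)/2 ≤ ‖w - u‖/‖z - u‖ := by
        rw [le_div_iff₀ hzu0]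
        linarith
      nlinarith [mul_pos hπ hδ0, hhalf]
    calc (∫⁻ u in (ball z (2*δ))ᶜ,
          ENNReal.ofReal ‖((Real.pi:ℂ) * (z - u))⁻¹ - ((Real.pi:ℂ) * (w - u))⁻¹‖ ∂ν).toReal
        ≤ (ENNReal.ofReal ((2*δ*Real.pi⁻¹) * (C₂ * (2*δ)^(α-1)))).toReal := by
          refine ENNReal.toReal_mono ENNReal.ofReal_ne_top ?_
          calc ∫⁻ u in (ball z (2*δ))ᶜ,
                ENNReal.ofReal ‖((Real.pi:ℂ) * (z - u))⁻¹ - ((Real.pi:ℂ) * (w - u))⁻¹‖ ∂ν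
              ≤ ∫⁻ u in (ball z (2*δ))ᶜ,
                  ENNReal.ofReal ((2*δ*Real.pi⁻¹) * (‖z - u‖⁻¹)^2) ∂ν :=
                setLIntegral_mono' measurableSet_ball.compl hpt
            _ = ∫⁻ u in (ball z (2*δ))ᶜ,
                  ENNReal.ofReal (2*δ*Real.pi⁻¹) * ENNReal.ofReal ((‖z - u‖⁻¹)^2) ∂ν := by
                refine lintegral_congr fun u => ?_
                rw [ENNReal.ofReal_mul (by positivity)]
            _ = ENNReal.ofReal (2*δ*Real.pi⁻¹)
                  * ∫⁻ u in (ball z (2*δ))ᶜ, ENNReal.ofReal ((‖z - u‖⁻¹)^2) ∂ν :=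
                lintegral_const_mul' _ _ ENNReal.ofReal_ne_top
            _ ≤ ENNReal.ofReal (2*δ*Real.pi⁻¹) * ENNReal.ofReal (C₂ * (2*δ)^(α-1)) := by
                gcongr
                have := lemB α M ⟨hα0, hα1⟩ hM ν hgrowth z (2*δ) (by positivity)
                rw [← hC₂def] at this
                exact this
            _ = ENNReal.ofReal ((2*δ*Real.pi⁻¹) * (C₂ * (2*δ)^(α-1))) :=
                (ENNReal.ofReal_mul (by positivity)).symm
      _ = (2*δ*Real.pi⁻¹) * (C₂ * (2*δ)^(α-1)) := ENNReal.toReal_ofReal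
          (mul_nonneg (by positivity)
            (mul_nonneg hC₂.le (Real.rpow_nonneg (by positivity) _)))
  -- combine
  have hδα0 : (0:ℝ) ≤ δ^α := Real.rpow_nonneg hδ0.le _
  have e2δ : (2*δ)^α = (2:ℝ)^α * δ^α := Real.mul_rpow (by norm_num) hδ0.le
  have e3δ : (3*δ)^α = (3:ℝ)^α * δ^α := Real.mul_rpow (by norm_num) hδ0.le
  have e2δ1 : (2*δ)^(α-1) = (2:ℝ)^(α-1) * δ^(α-1) := Real.mul_rpow (by norm_num) hδ0.le
  have hδα : δ^α = δ * δ^(α-1) := by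
    have h := Real.rpow_add hδ0 1 (α-1)
    rw [Real.rpow_one] at h
    rw [show α = 1 + (α-1) by ring]
    rw [show (1:ℝ) + (α-1) - 1 = α - 1 by ring]
    exact h
  have total : Real.pi⁻¹ * (C₁ * (2*δ)^α) + Real.pi⁻¹ * (C₁ * (3*δ)^α)
      + (2*δ*Real.pi⁻¹) * (C₂ * (2*δ)^(α-1)) = Cs * δ^α := by
    rw [hCsdef, e2δ, e3δ, e2δ1, hδα]
    ring
  calc ‖(∫ u, ((Real.pi:ℂ) * (z - u))⁻¹ ∂ν) - (∫ u, ((Real.pi:ℂ) * (w - u))⁻¹ ∂ν)‖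
      = ‖((∫ u in ball z (2*δ), ((Real.pi:ℂ) * (z - u))⁻¹ ∂ν)
          - (∫ u in ball z (2*δ), ((Real.pi:ℂ) * (w - u))⁻¹ ∂ν))
        + ∫ u in (ball z (2*δ))ᶜ,
            (((Real.pi:ℂ) * (z - u))⁻¹ - ((Real.pi:ℂ) * (w - u))⁻¹) ∂ν‖ := by rw [hsplit]
    _ ≤ ‖(∫ u in ball z (2*δ), ((Real.pi:ℂ) * (z - u))⁻¹ ∂ν)
          - (∫ u in ball z (2*δ), ((Real.pi:ℂ) * (w - u))⁻¹ ∂ν)‖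
        + ‖∫ u in (ball z (2*δ))ᶜ,
            (((Real.pi:ℂ) * (z - u))⁻¹ - ((Real.pi:ℂ) * (w - u))⁻¹) ∂ν‖ := norm_add_le _ _
    _ ≤ (‖∫ u in ball z (2*δ), ((Real.pi:ℂ) * (z - u))⁻¹ ∂ν‖
          + ‖∫ u in ball z (2*δ), ((Real.pi:ℂ) * (w - u))⁻¹ ∂ν‖)
        + ‖∫ u in (ball z (2*δ))ᶜ,
            (((Real.pi:ℂ) * (z - u))⁻¹ - ((Real.pi:ℂ) * (w - u))⁻¹) ∂ν‖ :=
          add_le_add (norm_sub_le _ _) le_rfl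
    _ ≤ (Real.pi⁻¹ * (C₁ * (2*δ)^α) + Real.pi⁻¹ * (C₁ * (3*δ)^α))
        + (2*δ*Real.pi⁻¹) * (C₂ * (2*δ)^(α-1)) := by
          exact add_le_add (add_le_add key1 key2) key3
    _ = Cs * δ^α := by rw [← total]
    _ ≤ (Cs + 1) * δ^α := by nlinarith
end
end

section
/- Let α ∈ (0,1), M > 0, and let ν be a finite positive Borel measure on ℂ, not identically zero, such that ν(D(z,r)) ≤ M r^{1+α} for every z ∈ ℂ and every r > 0. Let h(z) = ∫_ℂ 1/(π(z−w)) dν(w) be its Cauchy transform. Then h is complex differentiable (holomorphic) at every point of ℂ \ supp ν, but h is not holomorphic on all of ℂ; that is, h is a function holomorphic outside supp ν with no entire extension. -/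
open MeasureTheory Metric
open scoped ENNReal

noncomputable section

/-- The (closed) support of a Borel measure on `ℂ`: points all of whose neighbourhoods
have positive measure. -/
def measureSupport (ν : MeasureTheory.Measure ℂ) : Set ℂ :=
  {z : ℂ | ∀ r : ℝ, 0 < r → 0 < ν (ball z r)}

section Aux

open Set Complex
open scoped Real

lemma part1 (ν : Measure ℂ) [IsFiniteMeasure ν] :
    ∀ z ∉ measureSupport ν,
      DifferentiableAt ℂ (fun x : ℂ => ∫ u, (↑Real.pi * (x - u))⁻¹ ∂ν) z := by
  intro z₀ hz₀
  simp only [measureSupport, Set.mem_setOf_eq, not_forall] at hz₀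
  obtain ⟨r, hr, hball⟩ := hz₀
  replace hball : ν (ball z₀ r) = 0 := by
    simpa using (not_lt.mp hball)
  have hae : ∀ᵐ w ∂ν, w ∉ ball z₀ r := (measure_eq_zero_iff_ae_notMem).mp hball
  -- key distance fact
  have hdist : ∀ w : ℂ, w ∉ ball z₀ r → ∀ x ∈ ball z₀ (r/2), r/2 ≤ ‖x - w‖ := by
    intro w hw x hx
    rw [mem_ball, dist_comm] at hw hx
    push_neg at hw
    have h1 : dist z₀ w ≤ dist z₀ x + dist x w := dist_triangle _ _ _
    have : dist x w = ‖x - w‖ := by rw [dist_eq_norm]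
    linarith [hw, hx.le, h1]
  set F : ℂ → ℂ → ℂ := fun x w => (↑Real.pi * (x - w))⁻¹ with hF
  set F' : ℂ → ℂ → ℂ := fun x w => -(↑Real.pi) / (↑Real.pi * (x - w)) ^ 2 with hF'
  have hπ : (↑Real.pi : ℂ) ≠ 0 := by
    exact_mod_cast Real.pi_ne_zero
  have hmeas : ∀ x : ℂ, AEStronglyMeasurable (F x) ν := by
    intro x
    exact (((measurable_const.sub measurable_id).const_mul _).inv).aestronglyMeasurable
  have hkey := hasDerivAt_integral_of_dominated_loc_of_deriv_le (μ := ν) (x₀ := z₀)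
      (F := F) (F' := F') (bound := fun _ => Real.pi / (Real.pi * (r/2)) ^ 2)
      (ball_mem_nhds z₀ (half_pos hr))
      (Filter.Eventually.of_forall hmeas)
      ?hint ?hmeas' ?hbound (integrable_const _) ?hdiff
  · exact hkey.2.differentiableAt
  case hint =>
    refine Integrable.mono' (integrable_const ((Real.pi * (r/2))⁻¹)) (hmeas z₀) ?_
    filter_upwards [hae] with w hw
    have h2 : r/2 ≤ ‖z₀ - w‖ := hdist w hw z₀ (mem_ball_self (half_pos hr))
    rw [hF]
    simp only [norm_inv, norm_mul, Complex.norm_real, Real.norm_eq_abs,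
      abs_of_pos Real.pi_pos]
    apply inv_anti₀
    · positivity
    · exact mul_le_mul_of_nonneg_left h2 Real.pi_pos.le
  case hmeas' =>
    exact ((measurable_const.div (((measurable_const.sub measurable_id).const_mul _).pow_const 2))).aestronglyMeasurable
  case hbound =>
    filter_upwards [hae] with w hw x hx
    have h2 : r/2 ≤ ‖x - w‖ := hdist w hw x hx
    rw [hF']
    simp only [norm_div, norm_neg, norm_pow, norm_mul, Complex.norm_real,
      Real.norm_eq_abs, abs_of_pos Real.pi_pos]
    exact div_le_div_of_nonneg_left Real.pi_pos.le (by positivity)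
      (by gcongr)
  case hdiff =>
    filter_upwards [hae] with w hw x hx
    have h2 : r/2 ≤ ‖x - w‖ := hdist w hw x hx
    have hne : (↑Real.pi : ℂ) * (x - w) ≠ 0 := by
      apply mul_ne_zero hπ
      intro h
      rw [h] at h2
      simp at h2
      linarith
    have hc : HasDerivAt (fun y : ℂ => (↑Real.pi : ℂ) * (y - w)) (↑Real.pi) x := by
      simpa using ((hasDerivAt_id x).sub_const w).const_mul (↑Real.pi : ℂ)
    exact hc.inv hne


lemma uniform_bound (α M : ℝ) (hα : 0 < α) (hM : 0 < M) (ν : Measure ℂ) [IsFiniteMeasure ν]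
    (hgrowth : ∀ (z : ℂ) (r : ℝ), 0 < r → ν (ball z r) ≤ ENNReal.ofReal (M * r ^ (1 + α))) :
    ∃ C : ℝ≥0∞, C ≠ ∞ ∧ ∀ z : ℂ, (∫⁻ w, ENNReal.ofReal ‖z - w‖⁻¹ ∂ν) ≤ C := by
  -- the tail integral ∫_{Ioi 1} M t^{-(1+α)} dt is finite
  have htail : ∫⁻ t in Ioi (1:ℝ), ENNReal.ofReal (M * t ^ (-(1 + α))) ∂volume ≠ ∞ := by
    have hint : IntegrableOn (fun t : ℝ => M * t ^ (-(1 + α))) (Ioi (1:ℝ)) :=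
      (integrableOn_Ioi_rpow_of_lt (by linarith) one_pos).const_mul M
    have := hint.2
    rw [hasFiniteIntegral_iff_ofReal] at this
    · exact this.ne
    · filter_upwards [self_mem_ae_restrict measurableSet_Ioi] with t ht
      have : (0:ℝ) < t := lt_trans one_pos ht
      positivity
  refine ⟨ν Set.univ * ENNReal.ofReal 1 + ∫⁻ t in Ioi (1:ℝ), ENNReal.ofReal (M * t ^ (-(1 + α))) ∂volume,
    ?_, ?_⟩
  · exact ENNReal.add_ne_top.mpr ⟨ENNReal.mul_ne_top (measure_ne_top ν _) ENNReal.ofReal_ne_top, htail⟩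
  intro z
  have hmble : AEMeasurable (fun w : ℂ => ‖z - w‖⁻¹) ν :=
    (((measurable_const.sub measurable_id).norm).inv).aemeasurable
  rw [lintegral_eq_lintegral_meas_lt ν (Filter.Eventually.of_forall fun w => by positivity) hmble]
  -- split Ioi 0 = Ioc 0 1 ∪ Ioi 1
  have hsplit : (Ioi (0:ℝ)) = Ioc (0:ℝ) 1 ∪ Ioi 1 := by
    rw [Set.Ioc_union_Ioi_eq_Ioi]; norm_num
  rw [hsplit, lintegral_union measurableSet_Ioi Ioc_disjoint_Ioi_same]
  refine add_le_add ?_ ?_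
  · calc ∫⁻ t in Ioc (0:ℝ) 1, ν {w | t < ‖z - w‖⁻¹} ∂volume
        ≤ ∫⁻ _ in Ioc (0:ℝ) 1, ν Set.univ ∂volume := by
          apply lintegral_mono; intro t; exact measure_mono (Set.subset_univ _)
      _ = ν Set.univ * ENNReal.ofReal 1 := by
          rw [lintegral_const, Measure.restrict_apply_univ, Real.volume_Ioc]
          norm_num
  · apply lintegral_mono_ae
    filter_upwards [self_mem_ae_restrict measurableSet_Ioi] with t ht
    have ht0 : (0:ℝ) < t := lt_trans one_pos ht
    have hsub : {w : ℂ | t < ‖z - w‖⁻¹} ⊆ ball z t⁻¹ := by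
      intro w hw
      simp only [Set.mem_setOf_eq] at hw
      rw [mem_ball, dist_comm, dist_eq_norm]
      rcases eq_or_ne (‖z - w‖) 0 with h | h
      · rw [h] at hw; simp at hw; linarith
      · have hpos : 0 < ‖z - w‖ := lt_of_le_of_ne (norm_nonneg _) (Ne.symm h)
        rw [norm_sub_rev, ← inv_inv (‖w - z‖)]
        exact inv_strictAnti₀ (by positivity) (by rwa [norm_sub_rev] at hw)
    calc ν {w | t < ‖z - w‖⁻¹} ≤ ν (ball z t⁻¹) := measure_mono hsub
      _ ≤ ENNReal.ofReal (M * (t⁻¹) ^ (1 + α)) := hgrowth z _ (by positivity)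
      _ = ENNReal.ofReal (M * t ^ (-(1 + α))) := by
          rw [Real.inv_rpow ht0.le, ← Real.rpow_neg ht0.le]


lemma part2 (ν : Measure ℂ) [IsFiniteMeasure ν] (hν : ν ≠ 0)
    (hC : ∃ C : ℝ≥0∞, C ≠ ∞ ∧ ∀ z : ℂ, (∫⁻ w, ENNReal.ofReal ‖z - w‖⁻¹ ∂ν) ≤ C) :
    ¬ Differentiable ℂ (fun x : ℂ => ∫ u, (↑Real.pi * (x - u))⁻¹ ∂ν) := by
  intro hdiff
  obtain ⟨C, hCne, hCle⟩ := hC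
  -- choose n with ν (ball 0 n) > 0
  obtain ⟨n, hn⟩ : ∃ n : ℕ, 0 < ν (ball (0:ℂ) n) := by
    by_contra h
    push_neg at h
    simp only [le_zero_iff] at h
    have h0 : ν (⋃ n : ℕ, ball (0:ℂ) n) = 0 := measure_iUnion_null h
    rw [Metric.iUnion_ball_nat] at h0
    exact (Measure.measure_univ_pos.mpr hν).ne' h0
  -- choose R > n with ν (sphere 0 R) = 0
  have hcnt : Set.Countable {R : ℝ | 0 < ν (sphere (0:ℂ) R)} := by
    apply Measure.countable_meas_pos_of_disjoint_iUnion
      (fun R => isClosed_sphere.measurableSet)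
    intro R R' hne
    refine Set.disjoint_left.mpr fun w hw hw' => hne ?_
    rw [mem_sphere] at hw hw'
    rw [← hw, ← hw']
  obtain ⟨R, hRn, hRsph⟩ : ∃ R : ℝ, (n:ℝ) < R ∧ ν (sphere (0:ℂ) R) = 0 := by
    by_contra h
    push_neg at h
    have hsub : Set.Ioi (n:ℝ) ⊆ {R : ℝ | 0 < ν (sphere (0:ℂ) R)} := by
      intro R hR
      exact pos_iff_ne_zero.mpr (h R hR)
    have h2 := (hcnt.mono hsub).le_aleph0
    rw [Cardinal.mk_Ioi_real] at h2
    exact absurd h2 (not_le.mpr Cardinal.aleph0_lt_continuum)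
  have hR0 : (0:ℝ) < R := lt_of_le_of_lt (Nat.cast_nonneg n) hRn
  have hballpos : 0 < ν (ball (0:ℂ) R) :=
    lt_of_lt_of_le hn (measure_mono (ball_subset_ball hRn.le))
  have hπ : (↑Real.pi : ℂ) ≠ 0 := by exact_mod_cast Real.pi_ne_zero
  set h : ℂ → ℂ := fun x : ℂ => ∫ u, (↑Real.pi * (x - u))⁻¹ ∂ν with hh
  set g : ℝ → ℂ → ℂ := fun θ w =>
    deriv (circleMap 0 R) θ * (↑Real.pi * (circleMap 0 R θ - w))⁻¹ with hg
  -- Step A: circle integral of h vanishes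
  have hA : (∮ z in C(0, R), h z) = 0 := by
    refine circleIntegral_eq_zero_of_differentiable_on_off_countable hR0.le
      Set.countable_empty hdiff.continuous.continuousOn ?_
    intro z _
    exact hdiff z
  -- Step B: circle integral equals iterated integral
  have hB : (∮ z in C(0, R), h z) = ∫ θ in Set.Ioc 0 (2*Real.pi), ∫ w, g θ w ∂ν := by
    rw [circleIntegral, intervalIntegral.integral_of_le Real.two_pi_pos.le]
    refine setIntegral_congr_fun measurableSet_Ioc fun θ _ => ?_
    rw [smul_eq_mul, hh]
    simp only
    rw [← integral_const_mul]
  -- Step C: product integrability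
  have hgunc : Function.uncurry g = fun p : ℝ × ℂ =>
      (circleMap 0 R p.1 * I) * (↑Real.pi * (circleMap 0 R p.1 - p.2))⁻¹ := by
    funext p
    simp [Function.uncurry, hg, deriv_circleMap]
  have hCmeas : Measurable (Function.uncurry g) := by
    rw [hgunc]
    apply Measurable.mul
    · exact (((continuous_circleMap 0 R).mul continuous_const).measurable).comp measurable_fst
    · apply Measurable.inv
      apply Measurable.const_mul
      exact (((continuous_circleMap 0 R).measurable).comp measurable_fst).sub measurable_snd
  have hnorm : ∀ θ (w : ℂ), ‖g θ w‖ = (R / Real.pi) * ‖circleMap 0 R θ - w‖⁻¹ := by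
    intro θ w
    rw [hg]
    simp only [norm_mul, norm_inv, deriv_circleMap, norm_mul, Complex.norm_I,
      Complex.norm_real, Real.norm_eq_abs, abs_of_pos Real.pi_pos, mul_one,
      norm_circleMap_zero, abs_of_pos hR0, mul_inv]
    ring
  have hCint : Integrable (Function.uncurry g)
      ((volume.restrict (Set.Ioc 0 (2*Real.pi))).prod ν) := by
    constructor
    · exact hCmeas.aestronglyMeasurable
    · rw [hasFiniteIntegral_iff_norm]
      calc ∫⁻ p, ENNReal.ofReal ‖Function.uncurry g p‖
            ∂((volume.restrict (Set.Ioc 0 (2*Real.pi))).prod ν)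
          = ∫⁻ θ in Set.Ioc 0 (2*Real.pi), (∫⁻ w, ENNReal.ofReal ‖g θ w‖ ∂ν) ∂volume := by
            rw [lintegral_prod _ (hCmeas.norm.ennreal_ofReal.aemeasurable)]
            rfl
        _ ≤ ∫⁻ _ in Set.Ioc 0 (2*Real.pi), ENNReal.ofReal (R / Real.pi) * C ∂volume := by
            apply lintegral_mono
            intro θ
            calc ∫⁻ w, ENNReal.ofReal ‖g θ w‖ ∂ν
                = ∫⁻ w, ENNReal.ofReal (R / Real.pi) *
                    ENNReal.ofReal ‖circleMap 0 R θ - w‖⁻¹ ∂ν := by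
                  apply lintegral_congr
                  intro w
                  rw [hnorm, ENNReal.ofReal_mul (by positivity)]
              _ = ENNReal.ofReal (R / Real.pi) *
                    ∫⁻ w, ENNReal.ofReal ‖circleMap 0 R θ - w‖⁻¹ ∂ν := by
                  rw [lintegral_const_mul]
                  exact (((continuous_const.sub continuous_id).measurable.norm).inv).ennreal_ofReal
              _ ≤ ENNReal.ofReal (R / Real.pi) * C := by
                  exact mul_le_mul_right (hCle _) _
        _ < ⊤ := by
            rw [lintegral_const, Measure.restrict_apply_univ, Real.volume_Ioc]
            exact ENNReal.mul_lt_top (ENNReal.mul_lt_top ENNReal.ofReal_lt_top hCne.lt_top)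
              ENNReal.ofReal_lt_top
  -- Step D: swap
  have hD : (∫ θ in Set.Ioc 0 (2*Real.pi), ∫ w, g θ w ∂ν)
      = ∫ w, (∫ θ in Set.Ioc 0 (2*Real.pi), g θ w) ∂ν := integral_integral_swap hCint
  -- Step E: inner integral a.e.
  have hE : ∀ᵐ w ∂ν, (∫ θ in Set.Ioc 0 (2*Real.pi), g θ w)
      = Set.indicator (ball (0:ℂ) R) (fun _ => 2 * I) w := by
    have hae : ∀ᵐ w ∂ν, w ∉ sphere (0:ℂ) R := measure_eq_zero_iff_ae_notMem.mp hRsph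
    filter_upwards [hae] with w hw
    have key : (∫ θ in Set.Ioc 0 (2*Real.pi), g θ w)
        = (↑Real.pi : ℂ)⁻¹ * ∮ z in C(0, R), (z - w)⁻¹ := by
      rw [circleIntegral, intervalIntegral.integral_of_le Real.two_pi_pos.le,
        ← integral_const_mul]
      refine setIntegral_congr_fun measurableSet_Ioc fun θ _ => ?_
      simp only [hg, smul_eq_mul, mul_inv]
      ring
    have hwne : ‖w‖ ≠ R := fun habs =>
      hw (by rw [mem_sphere, dist_eq_norm, sub_zero]; exact habs)
    have hwball : ‖w‖ < R → w ∈ ball (0:ℂ) R := fun hlt => by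
      rw [mem_ball, dist_eq_norm, sub_zero]; exact hlt
    rcases hwne.lt_or_gt with hlt | hgt
    · rw [Set.indicator_of_mem (hwball hlt), key,
        circleIntegral.integral_sub_inv_of_mem_ball (hwball hlt)]
      field_simp
    · rw [Set.indicator_of_notMem
        (by rw [mem_ball, dist_eq_norm, sub_zero]; exact not_lt.mpr hgt.le), key]
      have hzero : (∮ z in C(0, R), (z - w)⁻¹) = 0 := by
        refine circleIntegral_eq_zero_of_differentiable_on_off_countable hR0.le
          Set.countable_empty ?_ ?_
        · apply ContinuousOn.inv₀
          · exact (continuous_id.sub continuous_const).continuousOn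
          · intro z hz
            rw [mem_closedBall, dist_eq_norm, sub_zero] at hz
            intro habs
            rw [sub_eq_zero] at habs
            rw [habs] at hz
            linarith
        · intro z hz
          simp only [Set.diff_empty, mem_ball, dist_eq_norm, sub_zero] at hz
          have : z - w ≠ 0 := by
            intro habs
            rw [sub_eq_zero] at habs
            rw [habs] at hz
            linarith
          exact ((differentiableAt_id.sub_const w).inv this)
      rw [hzero, mul_zero]
  -- Step F: conclude
  have hF : (∫ w, (∫ θ in Set.Ioc 0 (2*Real.pi), g θ w) ∂ν)
      = (ν (ball (0:ℂ) R)).toReal • (2 * I) := by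
    rw [integral_congr_ae hE, integral_indicator_const _ measurableSet_ball]
    rfl
  have hfinal : (0:ℂ) = (ν (ball (0:ℂ) R)).toReal • (2 * I) := by
    rw [← hF, ← hD, ← hB, hA]
  have htoReal : 0 < (ν (ball (0:ℂ) R)).toReal :=
    ENNReal.toReal_pos hballpos.ne' (measure_ne_top ν _)
  have hne : (ν (ball (0:ℂ) R)).toReal • (2 * I) ≠ 0 :=
    smul_ne_zero htoReal.ne' (mul_ne_zero two_ne_zero I_ne_zero)
  exact hne hfinal.symm


end Aux

/-- If `ν ≠ 0` is a finite positive Borel measure on `ℂ` with growth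
`ν(D(z,r)) ≤ M r^{1+α}`, then its Cauchy transform `h(z) = ∫ 1/(π(z−w)) dν(w)` is
holomorphic at every point outside the support of `ν`, but is not holomorphic on all
of `ℂ`: it has no entire extension. -/
theorem cauchyTransform_holomorphic_not_entire (α M : ℝ) (hα : α ∈ Set.Ioo (0 : ℝ) 1)
    (hM : 0 < M) (ν : Measure ℂ) [IsFiniteMeasure ν] (hν : ν ≠ 0)
    (hgrowth : ∀ (z : ℂ) (r : ℝ), 0 < r → ν (ball z r) ≤ ENNReal.ofReal (M * r ^ (1 + α))) :
    (∀ z ∉ measureSupport ν,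
      DifferentiableAt ℂ (fun x : ℂ => ∫ u, (↑Real.pi * (x - u))⁻¹ ∂ν) z) ∧
    ¬ Differentiable ℂ (fun x : ℂ => ∫ u, (↑Real.pi * (x - u))⁻¹ ∂ν) :=
  ⟨part1 ν, part2 ν hν (uniform_bound α M hα.1 hM ν hgrowth)⟩
end
end

section
/- Let 0 < γ ≤ 1 and C ≥ 1. Let (D_j)_{j∈ℕ}, with D_j = D(z_j, r_j), be a family of open disks contained in the unit disk 𝔻 ⊂ ℂ whose closed disks are pairwise disjoint. Let ψ : ℂ → ℂ be a continuous map such that: (i) ψ(z) = z for every z ∉ ⋃_j D_j; (ii) ψ(D_j) ⊆ closure(D_j) for every j; (iii) for every j and all z, w ∈ D_j one has |ψ(z) − ψ(w)| ≤ C|z − w|^γ. Then |ψ(z) − ψ(w)| ≤ (2C + 1)|z − w|^γ for all z, w ∈ ℂ with |z − w| < 1. -/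
open MeasureTheory Metric
open scoped ENNReal

noncomputable section

/-- Gluing lemma: if `ψ` is the identity outside a family of disjoint disks contained in
the unit disk, maps each disk into its closure, and is `γ`-Hölder with constant `C ≥ 1`
on each disk, then `ψ` is `γ`-Hölder on `ℂ` with constant `2C + 1` (for `|z−w| < 1`). -/
theorem glue_holder_on_disks (γ C : ℝ) (hγ0 : 0 < γ) (hγ1 : γ ≤ 1) (hC : 1 ≤ C)
    (z : ℕ → ℂ) (r : ℕ → ℝ) (hr : ∀ j, 0 < r j)
    (hsub : ∀ j, ball (z j) (r j) ⊆ ball (0 : ℂ) 1)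
    (hdisj : Pairwise fun i j => Disjoint (closedBall (z i) (r i)) (closedBall (z j) (r j)))
    (ψ : ℂ → ℂ) (hcont : Continuous ψ)
    (hid : ∀ x : ℂ, x ∉ ⋃ j, ball (z j) (r j) → ψ x = x)
    (hmap : ∀ j, ψ '' ball (z j) (r j) ⊆ closedBall (z j) (r j))
    (hhold : ∀ j, ∀ x ∈ ball (z j) (r j), ∀ y ∈ ball (z j) (r j),
      ‖ψ x - ψ y‖ ≤ C * ‖x - y‖ ^ γ) :
    ∀ x y : ℂ, ‖x - y‖ < 1 → ‖ψ x - ψ y‖ ≤ (2 * C + 1) * ‖x - y‖ ^ γ := by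
  have hC0 : (0:ℝ) ≤ C := le_trans zero_le_one hC
  -- monotonicity of rpow
  have hmono : ∀ a b : ℝ, 0 ≤ a → a ≤ b → a ^ γ ≤ b ^ γ :=
    fun a b ha hab => Real.rpow_le_rpow ha hab hγ0.le
  -- t ≤ t^γ for 0 ≤ t < 1
  have hself : ∀ t : ℝ, 0 ≤ t → t < 1 → t ≤ t ^ γ := by
    intro t ht ht1
    rcases eq_or_lt_of_le ht with h | h
    · rw [← h, Real.zero_rpow hγ0.ne']
    · calc t = t ^ (1:ℝ) := (Real.rpow_one t).symm
        _ ≤ t ^ γ := Real.rpow_le_rpow_of_exponent_ge h ht1.le hγ1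
  -- boundary points are fixed by ψ
  have hfix : ∀ i, ∀ p : ℂ, ‖p - z i‖ = r i → ψ p = p := by
    intro i p hp
    apply hid
    simp only [Set.mem_iUnion, mem_ball, not_exists]
    intro j hj
    rcases eq_or_ne j i with rfl | hne
    · rw [dist_eq_norm] at hj
      exact absurd hp hj.ne
    · have hpj : p ∈ closedBall (z j) (r j) := by
        rw [mem_closedBall, dist_eq_norm]; rw [dist_eq_norm] at hj; exact hj.le
      have hpi : p ∈ closedBall (z i) (r i) := by
        rw [mem_closedBall, dist_eq_norm, hp]
      exact Set.disjoint_left.mp (hdisj hne) hpj hpi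
  -- Hölder estimate extends to the closed ball
  have hhold' : ∀ i, ∀ x ∈ ball (z i) (r i), ∀ p ∈ closedBall (z i) (r i),
      ‖ψ x - ψ p‖ ≤ C * ‖x - p‖ ^ γ := by
    intro i x hx p hp
    have hcl : closure (ball (z i) (r i)) = closedBall (z i) (r i) :=
      closure_ball _ (hr i).ne'
    rw [← hcl] at hp
    have hsub' : closure (ball (z i) (r i)) ⊆ {q : ℂ | ‖ψ x - ψ q‖ ≤ C * ‖x - q‖ ^ γ} := by
      apply closure_minimal
      · intro q hq; exact hhold i x hx q hq
      · apply isClosed_le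
        · exact (continuous_const.sub hcont).norm
        · exact continuous_const.mul
            (((continuous_const.sub continuous_id).norm).rpow_const
              (fun q => Or.inr hγ0.le))
    exact hsub' hp
  -- segment from inside a ball to outside hits the sphere
  have hseg : ∀ i, ∀ u v : ℂ, u ∈ ball (z i) (r i) → v ∉ ball (z i) (r i) →
      ∃ t ∈ Set.Icc (0:ℝ) 1, ‖(u + t • (v - u)) - z i‖ = r i := by
    intro i u v hu hv
    set f : ℝ → ℝ := fun t => ‖(u + t • (v - u)) - z i‖ with hf
    have hcf : Continuous f := by
      apply Continuous.norm
      exact (continuous_const.add (continuous_id.smul continuous_const)).sub continuous_const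
    have h0 : f 0 < r i := by
      simpa [f, dist_eq_norm] using mem_ball.mp hu
    have h1 : r i ≤ f 1 := by
      rw [mem_ball, dist_eq_norm, not_lt] at hv
      simpa [f] using hv
    obtain ⟨t, ht, hft⟩ := intermediate_value_Icc (by norm_num : (0:ℝ) ≤ 1)
      hcf.continuousOn ⟨h0.le, h1⟩
    exact ⟨t, ht, hft⟩
  -- key: a fixed point on the segment close to ψ u
  have key : ∀ u v : ℂ, (¬ ∃ i, u ∈ ball (z i) (r i) ∧ v ∈ ball (z i) (r i)) →
      ∃ t ∈ Set.Icc (0:ℝ) 1, ψ (u + t • (v - u)) = u + t • (v - u) ∧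
        ‖ψ u - (u + t • (v - u))‖ ≤ C * ‖u - v‖ ^ γ := by
    intro u v huv
    by_cases hu : u ∈ ⋃ j, ball (z j) (r j)
    · obtain ⟨_, ⟨i, rfl⟩, hui⟩ := hu
      have hvi : v ∉ ball (z i) (r i) := fun hv => huv ⟨i, hui, hv⟩
      obtain ⟨t, ht, hpt⟩ := hseg i u v hui hvi
      set p := u + t • (v - u) with hp
      have hpc : p ∈ closedBall (z i) (r i) := by
        rw [mem_closedBall, dist_eq_norm, hpt]
      have hψp : ψ p = p := hfix i p hpt
      refine ⟨t, ht, hψp, ?_⟩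
      have h1 : ‖ψ u - ψ p‖ ≤ C * ‖u - p‖ ^ γ := hhold' i u hui p hpc
      rw [hψp] at h1
      refine h1.trans (mul_le_mul_of_nonneg_left ?_ hC0)
      apply hmono _ _ (norm_nonneg _)
      have : u - p = (-t) • (v - u) := by rw [hp]; ring_nf; module
      rw [this, norm_smul, norm_neg]
      calc ‖t‖ * ‖v - u‖ ≤ 1 * ‖v - u‖ := by
            apply mul_le_mul_of_nonneg_right _ (norm_nonneg _)
            rw [Real.norm_eq_abs, abs_of_nonneg ht.1]; exact ht.2
        _ = ‖u - v‖ := by rw [one_mul, norm_sub_rev]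
    · refine ⟨0, ⟨le_refl 0, zero_le_one⟩, ?_, ?_⟩
      · simpa using hid u hu
      · have : ‖ψ u - (u + (0:ℝ) • (v - u))‖ = 0 := by
          simp [hid u hu]
        rw [this]
        positivity
  intro x y hxy
  by_cases hsame : ∃ i, x ∈ ball (z i) (r i) ∧ y ∈ ball (z i) (r i)
  · obtain ⟨i, hx, hy⟩ := hsame
    refine (hhold i x hx y hy).trans ?_
    apply mul_le_mul_of_nonneg_right _ (Real.rpow_nonneg (norm_nonneg _) _)
    linarith
  · have hsame' : ¬ ∃ i, y ∈ ball (z i) (r i) ∧ x ∈ ball (z i) (r i) := by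
      intro ⟨i, hy, hx⟩; exact hsame ⟨i, hx, hy⟩
    obtain ⟨s, hs, hψp, hxp⟩ := key x y hsame
    obtain ⟨t, ht, hψq, hyq⟩ := key y x hsame'
    set p := x + s • (y - x) with hpdef
    set q := y + t • (x - y) with hqdef
    have hpq : ‖p - q‖ ≤ ‖x - y‖ := by
      have : p - q = (s + t - 1) • (y - x) := by rw [hpdef, hqdef]; module
      rw [this, norm_smul]
      calc ‖s + t - 1‖ * ‖y - x‖ ≤ 1 * ‖y - x‖ := by
            apply mul_le_mul_of_nonneg_right _ (norm_nonneg _)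
            rw [Real.norm_eq_abs, abs_le]
            constructor <;> [linarith [hs.1, ht.1]; linarith [hs.2, ht.2]]
        _ = ‖x - y‖ := by rw [one_mul, norm_sub_rev]
    have hyx : ‖y - x‖ = ‖x - y‖ := norm_sub_rev _ _
    calc ‖ψ x - ψ y‖ ≤ ‖ψ x - p‖ + ‖p - q‖ + ‖q - ψ y‖ := by
          have := norm_sub_le_norm_sub_add_norm_sub (ψ x) p (ψ y)
          have h2 := norm_sub_le_norm_sub_add_norm_sub p q (ψ y)
          linarith
      _ ≤ C * ‖x - y‖ ^ γ + ‖x - y‖ ^ γ + C * ‖x - y‖ ^ γ := by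
          have h1 : ‖p - q‖ ≤ ‖x - y‖ ^ γ :=
            hpq.trans (hself _ (norm_nonneg _) hxy)
          have h2 : ‖q - ψ y‖ ≤ C * ‖x - y‖ ^ γ := by
            rw [norm_sub_rev, ← hyx]; exact hyq
          linarith
      _ = (2 * C + 1) * ‖x - y‖ ^ γ := by ring
end
end

section
/- There exists m₀ ∈ ℕ such that for every integer m ≥ m₀ there exist points z₁, …, z_m in the open unit disk 𝔻 ⊂ ℂ and a radius r > 0 such that the closed disks closure(D(z_i, r)), i = 1, …, m, are pairwise disjoint and all contained in 𝔻, and m·r² ≥ 1/2. -/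
open Metric MeasureTheory
open scoped ENNReal

noncomputable section

/-- Lattice point of spacing `d`. -/
def lpt (d : ℝ) (n : ℤ × ℤ) : ℂ := ⟨d * n.1, d * n.2⟩

lemma lpt_re (d : ℝ) (n : ℤ × ℤ) : (lpt d n).re = d * n.1 := rfl
lemma lpt_im (d : ℝ) (n : ℤ × ℤ) : (lpt d n).im = d * n.2 := rfl

lemma lattice_dist {d : ℝ} (hd : 0 < d) {n n' : ℤ × ℤ} (h : n ≠ n') :
    d ≤ dist (lpt d n) (lpt d n') := by
  rw [Complex.dist_eq]
  have h' : n.1 ≠ n'.1 ∨ n.2 ≠ n'.2 := by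
    by_contra hc
    push_neg at hc
    exact h (Prod.ext hc.1 hc.2)
  rcases h' with h1 | h2
  · have : d * 1 ≤ |d * ((n.1 : ℝ) - (n'.1 : ℝ))| := by
      rw [abs_mul, abs_of_pos hd]
      have : (1 : ℝ) ≤ |((n.1 - n'.1 : ℤ) : ℝ)| := by
        rw [← Int.cast_abs]
        exact_mod_cast Int.one_le_abs (sub_ne_zero.mpr h1)
      rw [Int.cast_sub] at this
      nlinarith
    calc d = d * 1 := (mul_one d).symm
      _ ≤ |d * ((n.1 : ℝ) - (n'.1 : ℝ))| := this
      _ = |(lpt d n - lpt d n').re| := by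
          rw [Complex.sub_re, lpt_re, lpt_re, mul_sub]
      _ ≤ ‖lpt d n - lpt d n'‖ := Complex.abs_re_le_norm _
  · have : d * 1 ≤ |d * ((n.2 : ℝ) - (n'.2 : ℝ))| := by
      rw [abs_mul, abs_of_pos hd]
      have : (1 : ℝ) ≤ |((n.2 - n'.2 : ℤ) : ℝ)| := by
        rw [← Int.cast_abs]
        exact_mod_cast Int.one_le_abs (sub_ne_zero.mpr h2)
      rw [Int.cast_sub] at this
      nlinarith
    calc d = d * 1 := (mul_one d).symm
      _ ≤ |d * ((n.2 : ℝ) - (n'.2 : ℝ))| := this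
      _ = |(lpt d n - lpt d n').im| := by
          rw [Complex.sub_im, lpt_im, lpt_im, mul_sub]
      _ ≤ ‖lpt d n - lpt d n'‖ := Complex.abs_im_le_norm _

/-- The half-open grid cell with lower-left corner `lpt d n`. -/
def cell (d : ℝ) (n : ℤ × ℤ) : Set ℂ :=
  Complex.measurableEquivRealProd ⁻¹'
    ((Set.Ico (d * n.1) (d * n.1 + d)) ×ˢ (Set.Ico (d * n.2) (d * n.2 + d)))

lemma volume_cell {d : ℝ} (n : ℤ × ℤ) :
    volume (cell d n) = ENNReal.ofReal d * ENNReal.ofReal d := by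
  rw [cell, Complex.volume_preserving_equiv_real_prod.measure_preimage
    ((measurableSet_Ico.prod measurableSet_Ico).nullMeasurableSet)]
  rw [Measure.volume_eq_prod, Measure.prod_prod, Real.volume_Ico, Real.volume_Ico,
    add_sub_cancel_left, add_sub_cancel_left]

lemma floor_bounds {d : ℝ} (hd : 0 < d) (x : ℝ) :
    d * (⌊x / d⌋ : ℝ) ≤ x ∧ x < d * (⌊x / d⌋ : ℝ) + d := by
  constructor
  · calc d * (⌊x / d⌋ : ℝ) ≤ d * (x / d) :=
        mul_le_mul_of_nonneg_left (Int.floor_le _) hd.le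
      _ = x := by field_simp
  · have h1 : x / d < ⌊x / d⌋ + 1 := Int.lt_floor_add_one _
    have := (div_lt_iff₀ hd).mp h1
    nlinarith

lemma mem_cell_floor {d : ℝ} (hd : 0 < d) (q : ℂ) :
    q ∈ cell d (⌊q.re / d⌋, ⌊q.im / d⌋) := by
  obtain ⟨hre1, hre2⟩ := floor_bounds hd q.re
  obtain ⟨him1, him2⟩ := floor_bounds hd q.im
  simp only [cell, Set.mem_preimage, Complex.measurableEquivRealProd_apply, Set.mem_prod,
    Set.mem_Ico]
  exact ⟨⟨hre1, hre2⟩, him1, him2⟩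

lemma dist_floor_lt {d : ℝ} (hd : 0 < d) (q : ℂ) :
    dist q (lpt d (⌊q.re / d⌋, ⌊q.im / d⌋)) < 2 * d := by
  obtain ⟨hre1, hre2⟩ := floor_bounds hd q.re
  obtain ⟨him1, him2⟩ := floor_bounds hd q.im
  rw [Complex.dist_eq]
  calc ‖q - lpt d (⌊q.re / d⌋, ⌊q.im / d⌋)‖
      ≤ |(q - lpt d (⌊q.re / d⌋, ⌊q.im / d⌋)).re| +
        |(q - lpt d (⌊q.re / d⌋, ⌊q.im / d⌋)).im| := Complex.norm_le_abs_re_add_abs_im _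
    _ < 2 * d := by
        rw [Complex.sub_re, Complex.sub_im, lpt_re, lpt_im]
        rw [abs_of_nonneg (by simp only []; linarith), abs_of_nonneg (by simp only []; linarith)]
        simp only []
        linarith

/-- For all sufficiently large `m` one can pack `m` pairwise disjoint closed disks of equal
radius `r` inside the open unit disk with total (normalized) area `m r² ≥ 1/2`. -/
theorem disk_packing_half_area :
    ∃ m₀ : ℕ, ∀ m : ℕ, m₀ ≤ m →
      ∃ (z : Fin m → ℂ) (r : ℝ), 0 < r ∧
        (∀ i, closedBall (z i) r ⊆ ball (0 : ℂ) 1) ∧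
        (Pairwise fun i j => Disjoint (closedBall (z i) r) (closedBall (z j) r)) ∧
        (1 / 2 : ℝ) ≤ (m : ℝ) * r ^ 2 := by
  refine ⟨10000, fun m hm => ?_⟩
  have hm0 : (0 : ℝ) < m := by positivity
  have hmge : (10000 : ℝ) ≤ m := by exact_mod_cast hm
  set r : ℝ := Real.sqrt (1 / (2 * m)) with hrdef
  have hr2 : r ^ 2 = 1 / (2 * m) := Real.sq_sqrt (by positivity)
  have hr : 0 < r := Real.sqrt_pos.mpr (by positivity)
  have hrsmall : r ≤ 1 / 100 := by
    have h1 : r ^ 2 ≤ (1 / 100) ^ 2 := by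
      rw [hr2, show ((1 : ℝ) / 100) ^ 2 = 1 / 10000 by norm_num,
        div_le_div_iff₀ (by positivity) (by norm_num)]
      nlinarith
    nlinarith
  set d : ℝ := (9 / 4) * r with hddef
  have hd : 0 < d := by positivity
  set ρ : ℝ := 1 - (11 / 2) * r with hρdef
  have hρ : (189 : ℝ) / 200 ≤ ρ := by rw [hρdef]; linarith
  have hρ2d : ρ + 2 * d = 1 - r := by rw [hρdef, hddef]; ring
  -- lattice points inside ball 0 (1 - r)
  set S : Set (ℤ × ℤ) := {n | lpt d n ∈ ball (0 : ℂ) (1 - r)} with hSdef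
  have hSfin : S.Finite := by
    apply Set.Finite.subset (Set.finite_Icc (-(⌈1 / d⌉), -(⌈1 / d⌉)) (⌈1 / d⌉, ⌈1 / d⌉))
    rintro ⟨i, j⟩ hn
    have hlt : ‖lpt d (i, j)‖ < 1 - r := by
      simpa [Complex.dist_eq] using mem_ball.mp hn
    have hre : |d * (i : ℝ)| < 1 := by
      have := Complex.abs_re_le_norm (lpt d (i, j))
      rw [lpt_re] at this
      linarith [hr]
    have him : |d * (j : ℝ)| < 1 := by
      have := Complex.abs_im_le_norm (lpt d (i, j))
      rw [lpt_im] at this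
      linarith [hr]
    have hi : |(i : ℝ)| ≤ 1 / d := by
      rw [abs_mul, abs_of_pos hd] at hre
      rw [le_div_iff₀ hd]
      nlinarith [abs_nonneg (i : ℝ)]
    have hj : |(j : ℝ)| ≤ 1 / d := by
      rw [abs_mul, abs_of_pos hd] at him
      rw [le_div_iff₀ hd]
      nlinarith [abs_nonneg (j : ℝ)]
    have hi' : |i| ≤ ⌈1 / d⌉ := by
      have : ((|i| : ℤ) : ℝ) ≤ ⌈1 / d⌉ := by
        rw [Int.cast_abs]; exact hi.trans (Int.le_ceil _)
      exact_mod_cast this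
    have hj' : |j| ≤ ⌈1 / d⌉ := by
      have : ((|j| : ℤ) : ℝ) ≤ ⌈1 / d⌉ := by
        rw [Int.cast_abs]; exact hj.trans (Int.le_ceil _)
      exact_mod_cast this
    rw [abs_le] at hi' hj'
    simp only [Set.mem_Icc, Prod.le_def]
    exact ⟨⟨hi'.1, hj'.1⟩, hi'.2, hj'.2⟩
  set F : Finset (ℤ × ℤ) := hSfin.toFinset with hFdef
  -- covering: ball 0 ρ ⊆ ⋃ n ∈ F, cell d n
  have hcover : ball (0 : ℂ) ρ ⊆ ⋃ n ∈ F, cell d n := by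
    intro q hq
    have hq' : ‖q‖ < ρ := by simpa [Complex.dist_eq] using mem_ball.mp hq
    set n : ℤ × ℤ := (⌊q.re / d⌋, ⌊q.im / d⌋) with hndef
    have hnS : n ∈ S := by
      rw [hSdef, Set.mem_setOf_eq, mem_ball]
      rw [Complex.dist_eq, sub_zero]
      calc ‖lpt d n‖ ≤ ‖lpt d n - q‖ + ‖q‖ := by
            simpa using norm_add_le (lpt d n - q) q
        _ < 2 * d + ρ := by
            have h0 := dist_floor_lt hd q
            rw [Complex.dist_eq] at h0
            have h2 : ‖lpt d n - q‖ = ‖q - lpt d n‖ :=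
              norm_sub_rev _ _
            rw [h2]
            exact add_lt_add h0 hq'
        _ = 1 - r := by linarith [hρ2d]
    exact Set.mem_biUnion (hSfin.mem_toFinset.mpr hnS) (mem_cell_floor hd q)
  -- volume bound
  have hvol : volume (ball (0 : ℂ) ρ) ≤
      (F.card : ℝ≥0∞) * (ENNReal.ofReal d * ENNReal.ofReal d) := by
    calc volume (ball (0 : ℂ) ρ) ≤ volume (⋃ n ∈ F, cell d n) := measure_mono hcover
      _ ≤ ∑ n ∈ F, volume (cell d n) := measure_biUnion_finset_le _ _
      _ = (F.card : ℝ≥0∞) * (ENNReal.ofReal d * ENNReal.ofReal d) := by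
          simp [volume_cell]
  -- key numeric inequality : m * d^2 ≤ π * ρ^2
  have hπ : (3.14 : ℝ) ≤ Real.pi := by linarith [Real.pi_gt_d6]
  have hkey : (m : ℝ) * (d * d) ≤ Real.pi * (ρ * ρ) := by
    have hmd : (m : ℝ) * (d * d) = 81 / 32 := by
      have h3 : d * d = (81 / 16) * r ^ 2 := by rw [hddef]; ring
      rw [h3, hr2]
      field_simp
      ring
    rw [hmd]
    have h1 : (189 / 200 : ℝ) * (189 / 200) ≤ ρ * ρ :=
      mul_le_mul hρ hρ (by norm_num) (by linarith)
    have h2 : (3.14 : ℝ) * ((189 / 200) * (189 / 200)) ≤ Real.pi * (ρ * ρ) :=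
      mul_le_mul hπ h1 (by positivity) Real.pi_pos.le
    nlinarith [h2]
  -- m ≤ F.card
  have hcard : m ≤ F.card := by
    have hρ0 : (0 : ℝ) ≤ ρ := by linarith
    have hball : volume (ball (0 : ℂ) ρ) = ENNReal.ofReal (Real.pi * (ρ * ρ)) := by
      rw [Complex.volume_ball, sq, ← ENNReal.ofReal_mul hρ0,
        show ((NNReal.pi : ℝ≥0∞)) = ENNReal.ofReal Real.pi by
          rw [← NNReal.coe_real_pi, ENNReal.ofReal_coe_nnreal],
        ← ENNReal.ofReal_mul (by positivity : (0:ℝ) ≤ ρ * ρ), mul_comm]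
    have hge : (m : ℝ≥0∞) * (ENNReal.ofReal d * ENNReal.ofReal d) ≤
        volume (ball (0 : ℂ) ρ) := by
      rw [hball]
      have h4 : (m : ℝ≥0∞) * (ENNReal.ofReal d * ENNReal.ofReal d)
          = ENNReal.ofReal ((m : ℝ) * (d * d)) := by
        rw [← ENNReal.ofReal_mul hd.le,
          show ((m : ℝ≥0∞)) = ENNReal.ofReal (m : ℝ) from (ENNReal.ofReal_natCast m).symm,
          ← ENNReal.ofReal_mul (by positivity : (0:ℝ) ≤ (m:ℝ))]
      rw [h4]
      exact ENNReal.ofReal_le_ofReal hkey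
    have hfinal : (m : ℝ≥0∞) * (ENNReal.ofReal d * ENNReal.ofReal d) ≤
        (F.card : ℝ≥0∞) * (ENNReal.ofReal d * ENNReal.ofReal d) := hge.trans hvol
    have hdd : (ENNReal.ofReal d * ENNReal.ofReal d) ≠ 0 := by
      simp [ENNReal.ofReal_eq_zero, not_le, hd]
    have hdd' : (ENNReal.ofReal d * ENNReal.ofReal d) ≠ ⊤ := by
      simp [ENNReal.mul_eq_top]
    have := (ENNReal.mul_le_mul_iff_left hdd hdd').mp hfinal
    exact_mod_cast this
  -- build the embedding
  have hcard' : m ≤ Fintype.card ↥F := by rwa [Fintype.card_coe]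
  set e : Fin m → ℤ × ℤ := fun i => ((Fintype.equivFin ↥F).symm (Fin.castLE hcard' i) : ↥F)
    with hedef
  have he_inj : Function.Injective e := by
    intro i j hij
    have h5 : (Fintype.equivFin ↥F).symm (Fin.castLE hcard' i)
        = (Fintype.equivFin ↥F).symm (Fin.castLE hcard' j) := Subtype.ext hij
    have h6 := (Fintype.equivFin ↥F).symm.injective h5
    exact Fin.castLE_injective hcard' h6
  have heS : ∀ i, e i ∈ S := fun i => by
    have : e i ∈ F := ((Fintype.equivFin ↥F).symm (Fin.castLE hcard' i)).2
    exact hSfin.mem_toFinset.mp this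
  refine ⟨fun i => lpt d (e i), r, hr, ?_, ?_, ?_⟩
  · intro i w hw
    have h1 : ‖lpt d (e i)‖ < 1 - r := by
      simpa [Complex.dist_eq] using mem_ball.mp (heS i)
    rw [mem_ball, Complex.dist_eq, sub_zero]
    rw [mem_closedBall, Complex.dist_eq] at hw
    calc ‖w‖ ≤ ‖w - lpt d (e i)‖ + ‖lpt d (e i)‖ := by
          simpa using norm_add_le (w - lpt d (e i)) (lpt d (e i))
      _ < r + (1 - r) := add_lt_add_of_le_of_lt hw h1
      _ = 1 := by ring
  · intro i j hij
    apply closedBall_disjoint_closedBall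
    have hne : e i ≠ e j := fun h => hij (he_inj h)
    have h7 := lattice_dist hd hne
    have h8 : (2 : ℝ) * r < d := by rw [hddef]; linarith
    linarith
  · rw [hr2, mul_one_div, le_div_iff₀ (by positivity)]
    ring_nf
    nlinarith [hm0]
end
end
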